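/- Let H be the space ℓ²(ℕ, ℝ^p) of square-summable sequences with values in ℝ^p, and let P, K : H → H be maps satisfying P(0)=0, K(0)=0, and gain bounds ‖P u‖ ≤ γ_P ‖u‖ and ‖K v‖ ≤ γ_K ‖v‖ for all u, v ∈ H, where γ_P, γ_K ≥ 0 and γ_P γ_K < 1. If u, v, r, e ∈ H satisfy the feedback equations v = P u + e and u = K v + r, then ‖u‖ ≤ (‖r‖ + γ_K ‖e‖)/(1 - γ_P γ_K) and ‖v‖ ≤ (‖e‖ + γ_P ‖r‖)/(1 - γ_P γ_K). -/
import Mathlib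

/-- **Small gain theorem (quantitative form).**
Let `H = ℓ²(ℕ, ℝ^p)`, and let `P, K : H → H` map zero to zero with gain bounds
`‖P u‖ ≤ γP ‖u‖` and `‖K v‖ ≤ γK ‖v‖`, where `γP, γK ≥ 0` and `γP * γK < 1`.
If `v = P u + e` and `u = K v + r`, then
`‖u‖ ≤ (‖r‖ + γK ‖e‖) / (1 - γP γK)` and `‖v‖ ≤ (‖e‖ + γP ‖r‖) / (1 - γP γK)`. -/
theorem small_gain_quantitative (p : ℕ)
    (P K : lp (fun _ : ℕ => EuclideanSpace ℝ (Fin p)) 2 →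
           lp (fun _ : ℕ => EuclideanSpace ℝ (Fin p)) 2)
    (γP γK : ℝ) (hγP : 0 ≤ γP) (hγK : 0 ≤ γK) (hsmall : γP * γK < 1)
    (hP0 : P 0 = 0) (hK0 : K 0 = 0)
    (hPgain : ∀ u, ‖P u‖ ≤ γP * ‖u‖) (hKgain : ∀ v, ‖K v‖ ≤ γK * ‖v‖)
    (u v r e : lp (fun _ : ℕ => EuclideanSpace ℝ (Fin p)) 2)
    (hv : v = P u + e) (hu : u = K v + r) :
    ‖u‖ ≤ (‖r‖ + γK * ‖e‖) / (1 - γP * γK) ∧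
    ‖v‖ ≤ (‖e‖ + γP * ‖r‖) / (1 - γP * γK) := by
  have hpos : 0 < 1 - γP * γK := by linarith
  have hvb : ‖v‖ ≤ γP * ‖u‖ + ‖e‖ := by
    calc ‖v‖ ≤ ‖P u‖ + ‖e‖ := by rw [hv]; exact norm_add_le _ _
    _ ≤ γP * ‖u‖ + ‖e‖ := by linarith [hPgain u]
  have hub : ‖u‖ ≤ γK * ‖v‖ + ‖r‖ := by
    calc ‖u‖ ≤ ‖K v‖ + ‖r‖ := by rw [hu]; exact norm_add_le _ _
    _ ≤ γK * ‖v‖ + ‖r‖ := by linarith [hKgain v]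
  have h1 : ‖u‖ ≤ (‖r‖ + γK * ‖e‖) / (1 - γP * γK) := by
    rw [le_div_iff₀ hpos]
    have := mul_le_mul_of_nonneg_left hvb hγK
    nlinarith
  have h2 : ‖v‖ ≤ (‖e‖ + γP * ‖r‖) / (1 - γP * γK) := by
    rw [le_div_iff₀ hpos]
    have := mul_le_mul_of_nonneg_left hub hγP
    nlinarith
  exact ⟨h1, h2⟩
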